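/- Let F : ℝⁿ → ℝ be twice continuously differentiable with L₂-Lipschitz Hessian, and let α > 0. Fix x ∈ ℝⁿ, g ∈ ℝⁿ, and a symmetric matrix Ĥ ∈ ℝ^{n×n}, and let x⁺ be a global minimizer over ℝⁿ of the model f̂(y) = ⟨g, y − x⟩ + (1/2)⟨y − x, Ĥ(y − x)⟩ + (α/6)‖y − x‖³. Then the matrix inequality ∇²F(x⁺) ⪰ (∇²F(x) − Ĥ) − ((α + 2L₂)/2) ‖x⁺ − x‖ · I holds, i.e., ∇²F(x⁺) − ∇²F(x) + Ĥ + ((α + 2L₂)/2)‖x⁺ − x‖ I is positive semidefinite; consequently λ_min(∇²F(x⁺)) ≥ λ_min(∇²F(x) − Ĥ) − ((α + 2L₂)/2) ‖x⁺ − x‖. -/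

import Mathlib

open scoped BigOperators

/-- The smallest eigenvalue of a real symmetric matrix, characterized as the minimum of the
quadratic form `⟨w, Aw⟩` over unit vectors `w`. -/
noncomputable def lambdaMin {n : ℕ} (A : Matrix (Fin n) (Fin n) ℝ) : ℝ :=
  sInf {c : ℝ | ∃ w : EuclideanSpace ℝ (Fin n), ‖w‖ = 1 ∧ c = ∑ i, ∑ j, w i * A i j * w j}

namespace Statement16Aux

noncomputable section
variable {n : ℕ}

/-- quadratic form of a matrix on Euclidean space -/
def qf (H : Matrix (Fin n) (Fin n) ℝ) (u v : EuclideanSpace ℝ (Fin n)) : ℝ :=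
  ∑ i, ∑ j, u i * H i j * v j

/-- linear form -/
def lf (g u : EuclideanSpace ℝ (Fin n)) : ℝ := ∑ i, g i * u i

lemma lf_add (g u v : EuclideanSpace ℝ (Fin n)) : lf g (u + v) = lf g u + lf g v := by
  simp [lf, PiLp.add_apply, mul_add, Finset.sum_add_distrib]

lemma lf_smul (g : EuclideanSpace ℝ (Fin n)) (t : ℝ) (u : EuclideanSpace ℝ (Fin n)) :
    lf g (t • u) = t * lf g u := by
  simp only [lf, PiLp.smul_apply, smul_eq_mul, Finset.mul_sum]
  refine Finset.sum_congr rfl fun i _ => by ring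

lemma qf_add_left (H : Matrix (Fin n) (Fin n) ℝ) (u v w : EuclideanSpace ℝ (Fin n)) :
    qf H (u + v) w = qf H u w + qf H v w := by
  simp [qf, PiLp.add_apply, add_mul, Finset.sum_add_distrib]

lemma qf_add_right (H : Matrix (Fin n) (Fin n) ℝ) (u v w : EuclideanSpace ℝ (Fin n)) :
    qf H u (v + w) = qf H u v + qf H u w := by
  simp [qf, PiLp.add_apply, mul_add, Finset.sum_add_distrib]

lemma qf_smul_left (H : Matrix (Fin n) (Fin n) ℝ) (t : ℝ) (u w : EuclideanSpace ℝ (Fin n)) :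
    qf H (t • u) w = t * qf H u w := by
  simp only [qf, PiLp.smul_apply, smul_eq_mul, Finset.mul_sum]
  congr 1; ext i; congr 1; ext j; ring

lemma qf_smul_right (H : Matrix (Fin n) (Fin n) ℝ) (t : ℝ) (u w : EuclideanSpace ℝ (Fin n)) :
    qf H u (t • w) = t * qf H u w := by
  simp only [qf, PiLp.smul_apply, smul_eq_mul, Finset.mul_sum]
  congr 1; ext i; congr 1; ext j; ring

lemma qf_symm {H : Matrix (Fin n) (Fin n) ℝ} (hH : H.IsSymm) (u w : EuclideanSpace ℝ (Fin n)) :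
    qf H u w = qf H w u := by
  rw [qf, Finset.sum_comm]
  refine Finset.sum_congr rfl fun j _ => Finset.sum_congr rfl fun i _ => ?_
  rw [← hH.apply i j]; ring

lemma qf_matrix_add (A B : Matrix (Fin n) (Fin n) ℝ) (u w : EuclideanSpace ℝ (Fin n)) :
    qf (A + B) u w = qf A u w + qf B u w := by
  simp [qf, Matrix.add_apply, mul_add, add_mul, Finset.sum_add_distrib]

lemma qf_matrix_sub (A B : Matrix (Fin n) (Fin n) ℝ) (u w : EuclideanSpace ℝ (Fin n)) :
    qf (A - B) u w = qf A u w - qf B u w := by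
  simp [qf, Matrix.sub_apply, mul_sub, sub_mul, Finset.sum_sub_distrib]

lemma sum_self_eq_norm_sq (u : EuclideanSpace ℝ (Fin n)) : ∑ i, u i * u i = ‖u‖ ^ 2 := by
  rw [EuclideanSpace.norm_eq, Real.sq_sqrt (Finset.sum_nonneg fun i _ => sq_nonneg _)]
  simp [Real.norm_eq_abs, sq_abs, sq]

lemma qf_smul_one (r : ℝ) (u : EuclideanSpace ℝ (Fin n)) :
    qf (r • (1 : Matrix (Fin n) (Fin n) ℝ)) u u = r * ‖u‖ ^ 2 := by
  rw [← sum_self_eq_norm_sq, Finset.mul_sum]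
  simp [qf, Matrix.smul_apply, Matrix.one_apply, mul_ite, ite_mul, Finset.mul_sum]
  exact Finset.sum_congr rfl fun i _ => by ring

lemma lf_zero (g : EuclideanSpace ℝ (Fin n)) : lf g 0 = 0 := by simp [lf]

lemma qf_zero (H : Matrix (Fin n) (Fin n) ℝ) : qf H 0 0 = 0 := by simp [qf]

lemma cont_nonneg_of_pos {f : ℝ → ℝ} (hc : Continuous f)
    (h : ∀ t : ℝ, 0 < t → 0 ≤ f t) : 0 ≤ f 0 := by
  have ht : Filter.Tendsto f (nhdsWithin 0 (Set.Ioi 0)) (nhds (f 0)) :=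
    (hc.tendsto 0).mono_left nhdsWithin_le_nhds
  exact ge_of_tendsto ht (Filter.eventually_of_mem self_mem_nhdsWithin fun t htt => h t htt)

lemma continuous_qf (H : Matrix (Fin n) (Fin n) ℝ) :
    Continuous (fun u : EuclideanSpace ℝ (Fin n) => qf H u u) := by
  unfold qf
  refine continuous_finset_sum _ fun i _ => continuous_finset_sum _ fun j _ => ?_
  have he : ∀ k : Fin n, Continuous (fun u : EuclideanSpace ℝ (Fin n) => u k) := fun k =>
    (EuclideanSpace.proj (𝕜 := ℝ) k).continuous
  exact ((he i).mul continuous_const).mul (he j)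

lemma norm_add_smul_sq (s w : EuclideanSpace ℝ (Fin n)) (t : ℝ) :
    ‖s + t • w‖ ^ 2 = ‖s‖^2 + 2 * (inner ℝ s w : ℝ) * t + ‖w‖^2 * t^2 := by
  rw [norm_add_sq_real, real_inner_smul_right, norm_smul, Real.norm_eq_abs, mul_pow, sq_abs]
  ring

lemma cube_eq (u : EuclideanSpace ℝ (Fin n)) : ‖u‖ ^ 3 = ‖u‖^2 * Real.sqrt (‖u‖^2) := by
  rw [Real.sqrt_sq (norm_nonneg u)]; ring

/-- First-order optimality condition for the cubic model at a nonzero minimizer. -/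
lemma foc (g s w : EuclideanSpace ℝ (Fin n)) (H : Matrix (Fin n) (Fin n) ℝ) (hH : H.IsSymm)
    (α : ℝ) (ha : 0 < ‖s‖)
    (hm : ∀ u : EuclideanSpace ℝ (Fin n), lf g s + (1/2) * qf H s s + (α/6) * ‖s‖^3 ≤
                     lf g u + (1/2) * qf H u u + (α/6) * ‖u‖^3) :
    lf g w + qf H s w = -(α/2) * ‖s‖ * (inner ℝ s w : ℝ) := by
  set a := ‖s‖ with ha_def
  set b : ℝ := (inner ℝ s w : ℝ) with hb_def
  set c : ℝ := lf g w + qf H s w with hc_def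
  set q : ℝ → ℝ := fun t => a^2 + 2*b*t + ‖w‖^2 * t^2 with hq_def
  have hq_eq : ∀ t : ℝ, ‖s + t • w‖ ^ 2 = q t := by
    intro t; rw [norm_add_smul_sq]
  set ψ : ℝ → ℝ := fun t => (lf g s + (1/2) * qf H s s) + c * t
      + ((1/2) * qf H w w) * t^2 + (α/6) * (q t * Real.sqrt (q t)) with hψ_def
  have hψ : ∀ t : ℝ, ψ t = lf g (s + t • w) + (1/2) * qf H (s + t • w) (s + t • w)
      + (α/6) * ‖s + t • w‖^3 := by
    intro t
    simp only [cube_eq, hq_eq, lf_add, lf_smul, qf_add_left, qf_add_right,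
      qf_smul_left, qf_smul_right]
    rw [qf_symm hH w s]
    simp only [hψ_def, hc_def]
    ring
  have hmin' : ∀ t : ℝ, ψ 0 ≤ ψ t := by
    intro t
    rw [hψ, hψ]
    simpa using hm (s + t • w)
  have hq0 : q 0 = a^2 := by simp [hq_def]
  have hq0ne : q 0 ≠ 0 := by rw [hq0]; positivity
  have hsq0 : Real.sqrt (q 0) = a := by rw [hq0, Real.sqrt_sq ha.le]
  have h1 : HasDerivAt (fun t : ℝ => t^2) (2*(0:ℝ)^1) 0 := hasDerivAt_pow 2 0
  have h3 : HasDerivAt (fun t : ℝ => 2*b*t) (2*b) 0 := by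
    simpa using (hasDerivAt_id (0:ℝ)).const_mul (2*b)
  have hq' : HasDerivAt q (2*b) 0 := by
    have := ((hasDerivAt_const (0:ℝ) (a^2)).add h3).add (h1.const_mul (‖w‖^2))
    simpa [hq_def, Pi.add_def] using this
  have hsq : HasDerivAt (fun t => Real.sqrt (q t)) (1/(2*Real.sqrt (q 0)) * (2*b)) 0 :=
    (Real.hasDerivAt_sqrt hq0ne).comp 0 hq'
  have hprod : HasDerivAt (fun t => q t * Real.sqrt (q t))
      (2*b*Real.sqrt (q 0) + q 0 * (1/(2*Real.sqrt (q 0)) * (2*b))) 0 := hq'.mul hsq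
  have hlin : HasDerivAt (fun t : ℝ => c * t) c 0 := by
    simpa using (hasDerivAt_id (0:ℝ)).const_mul c
  have hψ' : HasDerivAt ψ (c + (α/6) * (2*b*Real.sqrt (q 0)
      + q 0 * (1/(2*Real.sqrt (q 0)) * (2*b)))) 0 := by
    have := (((hasDerivAt_const (0:ℝ) (lf g s + (1/2) * qf H s s)).add hlin).add
      ((h1.const_mul ((1/2) * qf H w w)))).add (hprod.const_mul (α/6))
    simpa [hψ_def, mul_comm, Pi.add_def] using this
  have hloc : IsLocalMin ψ 0 := Filter.Eventually.of_forall hmin'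
  have hzero := hloc.hasDerivAt_eq_zero hψ'
  rw [hsq0, hq0] at hzero
  have hane : a ≠ 0 := ne_of_gt ha
  field_simp at hzero
  nlinarith [hzero]

lemma keyA_ne (g s : EuclideanSpace ℝ (Fin n)) (H : Matrix (Fin n) (Fin n) ℝ) (hH : H.IsSymm)
    (α : ℝ) (ha : 0 < ‖s‖)
    (hm : ∀ u : EuclideanSpace ℝ (Fin n), lf g s + (1/2) * qf H s s + (α/6) * ‖s‖^3 ≤
                     lf g u + (1/2) * qf H u u + (α/6) * ‖u‖^3)
    (v : EuclideanSpace ℝ (Fin n)) (hbne : (inner ℝ s v : ℝ) ≠ 0) :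
    0 ≤ qf H v v + (α/2) * ‖s‖ * ‖v‖^2 := by
  have hvne : v ≠ 0 := by
    intro h; exact hbne (by simp [h])
  have hv : (0:ℝ) < ‖v‖ := norm_pos_iff.mpr hvne
  set a := ‖s‖ with ha_def
  set b : ℝ := (inner ℝ s v : ℝ) with hb_def
  set τ : ℝ := -2*b/‖v‖^2 with hτ_def
  have hq : ‖s + τ • v‖^2 = a^2 := by
    rw [norm_add_smul_sq]
    have : 2 * b * τ + ‖v‖^2 * τ^2 = 0 := by
      rw [hτ_def]; field_simp; ring
    linarith
  have hnorm_eq : ‖s + τ • v‖ = a := by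
    have := congrArg Real.sqrt hq
    rwa [Real.sqrt_sq (norm_nonneg _), Real.sqrt_sq ha.le] at this
  have hexp := hm (s + τ • v)
  simp only [lf_add, lf_smul, qf_add_left, qf_add_right, qf_smul_left, qf_smul_right,
    hnorm_eq] at hexp
  rw [qf_symm hH v s] at hexp
  have hfocv : lf g v + qf H s v = -(α/2)*a*b := foc g s v H hH α ha hm
  have hstep : τ * (lf g v) + τ * (qf H s v) = τ * (-(α/2)*a*b) := by
    rw [← hfocv]; ring
  have h3 : 0 ≤ τ * (-(α/2)*a*b) + τ^2 * ((1/2) * qf H v v) := by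
    rw [← hstep]; linarith [hexp]
  have hb2 : (0:ℝ) < b^2 := by positivity
  have hv2 : (0:ℝ) < ‖v‖^2 := by positivity
  have hne : (‖v‖:ℝ) ≠ 0 := ne_of_gt hv
  have hideq : ‖v‖^4 * (τ * (-(α/2)*a*b) + τ^2 * ((1/2) * qf H v v))
      = α*a*b^2*‖v‖^2 + 2*b^2*(qf H v v) := by
    rw [hτ_def]; field_simp
  have hclear : 0 ≤ α*a*b^2*‖v‖^2 + 2*b^2*(qf H v v) := by
    rw [← hideq]; exact mul_nonneg (by positivity) h3
  nlinarith [hclear, hb2, mul_pos hb2 hv2]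

lemma keyA (g s : EuclideanSpace ℝ (Fin n)) (H : Matrix (Fin n) (Fin n) ℝ) (hH : H.IsSymm)
    (α : ℝ) (hα : 0 < α)
    (hm : ∀ u : EuclideanSpace ℝ (Fin n), lf g s + (1/2) * qf H s s + (α/6) * ‖s‖^3 ≤
                     lf g u + (1/2) * qf H u u + (α/6) * ‖u‖^3)
    (v : EuclideanSpace ℝ (Fin n)) : 0 ≤ qf H v v + (α/2) * ‖s‖ * ‖v‖^2 := by
  rcases eq_or_lt_of_le (norm_nonneg s) with h0 | ha
  · have hs : s = 0 := norm_eq_zero.mp h0.symm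
    subst hs
    have hm0 : ∀ u : EuclideanSpace ℝ (Fin n),
        0 ≤ lf g u + (1/2) * qf H u u + (α/6) * ‖u‖^3 := by
      intro u
      have := hm u
      rw [lf_zero, qf_zero, norm_zero] at this
      simpa using this
    have hsm : ∀ (t : ℝ) (w : EuclideanSpace ℝ (Fin n)), 0 < t →
        0 ≤ t * (lf g w + t * ((1/2) * qf H w w) + t^2 * ((α/6) * ‖w‖^3)) := by
      intro t w ht
      have := hm0 (t • w)
      rw [lf_smul, qf_smul_left, qf_smul_right, norm_smul, Real.norm_eq_abs,
        abs_of_pos ht] at this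
      nlinarith [this]
    have step1 : ∀ w : EuclideanSpace ℝ (Fin n), 0 ≤ lf g w := by
      intro w
      have hcont : Continuous (fun t : ℝ => lf g w + t * ((1/2) * qf H w w)
          + t^2 * ((α/6) * ‖w‖^3)) := by fun_prop
      have := cont_nonneg_of_pos hcont (fun t ht => by
        have h := hsm t w ht
        have := (mul_nonneg_iff_of_pos_left ht).mp h
        linarith)
      simpa using this
    have hlfv : lf g v = 0 := by
      have h1 := step1 v
      have h2 := step1 (-v)
      have h3 : lf g (-v) = - lf g v := by
        have h4 : (-v : EuclideanSpace ℝ (Fin n)) = (-1 : ℝ) • v := by simp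
        rw [h4, lf_smul]; ring
      linarith [h2, h3.le, h3.ge]
    have step2 : 0 ≤ qf H v v := by
      have hcont : Continuous (fun t : ℝ => (1/2) * qf H v v + t * ((α/6) * ‖v‖^3)) := by
        fun_prop
      have := cont_nonneg_of_pos hcont (fun t ht => by
        have h := hsm t v ht
        have h' := (mul_nonneg_iff_of_pos_left ht).mp h
        rw [hlfv] at h'
        have : 0 ≤ t * ((1/2) * qf H v v + t * ((α/6) * ‖v‖^3)) := by nlinarith [h']
        exact (mul_nonneg_iff_of_pos_left ht).mp this)
      simpa using this
    simp only [norm_zero]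
    nlinarith [step2, sq_nonneg ‖v‖]
  · by_cases hb : (inner ℝ s v : ℝ) = 0
    · set f : ℝ → ℝ := fun ε => qf H (v + ε • s) (v + ε • s) + (α/2) * ‖s‖ * ‖v + ε • s‖^2
        with hf_def
      have hline : Continuous (fun ε : ℝ => v + ε • s) :=
        continuous_const.add (continuous_id.smul continuous_const)
      have hcont : Continuous f :=
        ((continuous_qf H).comp hline).add (continuous_const.mul ((hline.norm).pow 2))
      have hpos : ∀ ε : ℝ, 0 < ε → 0 ≤ f ε := by
        intro ε hε
        apply keyA_ne g s H hH α ha hm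
        rw [inner_add_right, real_inner_smul_right, hb, real_inner_self_eq_norm_sq]
        have : (0:ℝ) < ε * ‖s‖^2 := by positivity
        simpa using ne_of_gt this
      have := cont_nonneg_of_pos hcont hpos
      simpa [hf_def] using this
    · exact keyA_ne g s H hH α ha hm v hb

lemma qf_eq_inner (A : Matrix (Fin n) (Fin n) ℝ) (v : EuclideanSpace ℝ (Fin n)) :
    qf A v v = (inner ℝ v ((Matrix.toEuclideanCLM (𝕜 := ℝ) A) v) : ℝ) := by
  have hTv : ∀ i, (Matrix.toEuclideanCLM (𝕜 := ℝ) A) v i = ∑ j, A i j * v j := by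
    intro i
    have h := congrFun (Matrix.ofLp_toEuclideanCLM (𝕜 := ℝ) A v) i
    simpa [Matrix.mulVec, dotProduct] using h
  simp only [PiLp.inner_apply, RCLike.inner_apply, conj_trivial, hTv, Finset.mul_sum, Finset.sum_mul, qf]
  exact Finset.sum_congr rfl fun i _ => Finset.sum_congr rfl fun j _ => by ring

lemma keyB (A : Matrix (Fin n) (Fin n) ℝ) (v : EuclideanSpace ℝ (Fin n)) :
    |qf A v v| ≤ ‖Matrix.toEuclideanCLM (𝕜 := ℝ) A‖ * ‖v‖^2 := by
  rw [qf_eq_inner]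
  calc |(inner ℝ v ((Matrix.toEuclideanCLM (𝕜 := ℝ) A) v) : ℝ)|
      ≤ ‖v‖ * ‖(Matrix.toEuclideanCLM (𝕜 := ℝ) A) v‖ := abs_real_inner_le_norm _ _
    _ ≤ ‖v‖ * (‖Matrix.toEuclideanCLM (𝕜 := ℝ) A‖ * ‖v‖) :=
        mul_le_mul_of_nonneg_left ((Matrix.toEuclideanCLM (𝕜 := ℝ) A).le_opNorm v)
          (norm_nonneg v)
    _ = ‖Matrix.toEuclideanCLM (𝕜 := ℝ) A‖ * ‖v‖^2 := by ring

lemma coord_abs_le (w : EuclideanSpace ℝ (Fin n)) (i : Fin n) : |w i| ≤ ‖w‖ := by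
  have h1 : (w i)^2 ≤ ∑ j, w j * w j := by
    have := Finset.single_le_sum (f := fun j => w j * w j)
      (fun j _ => mul_self_nonneg (w j)) (Finset.mem_univ i)
    simp only at this
    nlinarith [this]
  calc |w i| = Real.sqrt ((w i)^2) := (Real.sqrt_sq_eq_abs _).symm
    _ ≤ Real.sqrt (‖w‖^2) := Real.sqrt_le_sqrt (by rw [← sum_self_eq_norm_sq]; exact h1)
    _ = ‖w‖ := Real.sqrt_sq (norm_nonneg w)

lemma qf_abs_le_of_unit (A : Matrix (Fin n) (Fin n) ℝ) (w : EuclideanSpace ℝ (Fin n))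
    (hw : ‖w‖ = 1) : |qf A w w| ≤ ∑ i, ∑ j, |A i j| := by
  calc |qf A w w| ≤ ∑ i, |∑ j, w i * A i j * w j| :=
        Finset.abs_sum_le_sum_abs _ _
    _ ≤ ∑ i, ∑ j, |w i * A i j * w j| :=
        Finset.sum_le_sum fun i _ => Finset.abs_sum_le_sum_abs _ _
    _ ≤ ∑ i, ∑ j, |A i j| := by
        refine Finset.sum_le_sum fun i _ => Finset.sum_le_sum fun j _ => ?_
        rw [abs_mul, abs_mul]
        have hwi : |w i| ≤ 1 := by rw [← hw]; exact coord_abs_le w i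
        have hwj : |w j| ≤ 1 := by rw [← hw]; exact coord_abs_le w j
        calc |w i| * |A i j| * |w j| ≤ 1 * |A i j| * 1 := by
              apply mul_le_mul (mul_le_mul hwi le_rfl (abs_nonneg _) (by norm_num)) hwj
                (abs_nonneg _)
              positivity
          _ = |A i j| := by ring

end
end Statement16Aux

open Statement16Aux

theorem statement16 {n : ℕ} (F : EuclideanSpace ℝ (Fin n) → ℝ) (hF : ContDiff ℝ 2 F)
    (HF : EuclideanSpace ℝ (Fin n) → Matrix (Fin n) (Fin n) ℝ)
    (hHF : ∀ (y : EuclideanSpace ℝ (Fin n)) (w₁ w₂ : EuclideanSpace ℝ (Fin n)),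
      iteratedFDeriv ℝ 2 F y ![w₁, w₂] = ∑ i, ∑ j, w₁ i * HF y i j * w₂ j)
    (L₂ : ℝ) (hL₂ : 0 ≤ L₂)
    (hLip : ∀ x y : EuclideanSpace ℝ (Fin n),
      ‖Matrix.toEuclideanCLM (𝕜 := ℝ) (HF x - HF y)‖ ≤ L₂ * ‖x - y‖)
    (α : ℝ) (hα : 0 < α)
    (x g : EuclideanSpace ℝ (Fin n)) (Hhat : Matrix (Fin n) (Fin n) ℝ) (hHhat : Hhat.IsSymm)
    (xplus : EuclideanSpace ℝ (Fin n))
    (hmin : ∀ y : EuclideanSpace ℝ (Fin n),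
      (∑ i, g i * (xplus - x) i) +
          (1 / 2) * (∑ i, ∑ j, (xplus - x) i * Hhat i j * (xplus - x) j) +
          (α / 6) * ‖xplus - x‖ ^ 3 ≤
        (∑ i, g i * (y - x) i) + (1 / 2) * (∑ i, ∑ j, (y - x) i * Hhat i j * (y - x) j) +
          (α / 6) * ‖y - x‖ ^ 3) :
    (HF xplus - HF x + Hhat +
        (((α + 2 * L₂) / 2) * ‖xplus - x‖) • (1 : Matrix (Fin n) (Fin n) ℝ)).PosSemidef ∧
      lambdaMin (HF x - Hhat) - ((α + 2 * L₂) / 2) * ‖xplus - x‖ ≤ lambdaMin (HF xplus) := by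
  classical
  -- symmetry of the Hessian matrices
  have hHFherm : ∀ y : EuclideanSpace ℝ (Fin n), (HF y).IsHermitian := by
    intro y
    have hsym : IsSymmSndFDerivAt ℝ F y := (hF.contDiffAt).isSymmSndFDerivAt (by norm_num)
    have key : ∀ w₁ w₂ : EuclideanSpace ℝ (Fin n),
        (∑ i, ∑ j, w₁ i * HF y i j * w₂ j) = ∑ i, ∑ j, w₂ i * HF y i j * w₁ j := by
      intro w₁ w₂
      rw [← hHF, ← hHF, iteratedFDeriv_two_apply, iteratedFDeriv_two_apply]
      simpa using hsym.eq w₁ w₂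
    rw [Matrix.IsHermitian]
    ext i j
    have hkey := key (EuclideanSpace.single j (1:ℝ)) (EuclideanSpace.single i (1:ℝ))
    simp only [EuclideanSpace.single_apply, mul_ite, ite_mul, Finset.sum_ite_eq,
      Finset.sum_ite_eq', mul_one, one_mul, mul_zero, zero_mul, Finset.mem_univ,
      if_true] at hkey
    simp [Matrix.conjTranspose_apply, hkey]
  -- restate minimality
  set s : EuclideanSpace ℝ (Fin n) := xplus - x with hs_def
  have hm : ∀ u : EuclideanSpace ℝ (Fin n),
      lf g s + (1/2) * qf Hhat s s + (α/6) * ‖s‖^3 ≤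
      lf g u + (1/2) * qf Hhat u u + (α/6) * ‖u‖^3 := by
    intro u
    have h := hmin (x + u)
    rw [add_sub_cancel_left] at h
    exact h
  have hA := keyA g s Hhat hHhat α hα hm
  -- Lipschitz bound
  have hBop := hLip xplus x
  rw [← hs_def] at hBop
  -- the quadratic form of the target matrix is nonnegative
  have hquad : ∀ v : EuclideanSpace ℝ (Fin n),
      0 ≤ qf (HF xplus - HF x + Hhat +
        (((α + 2 * L₂) / 2) * ‖s‖) • (1 : Matrix (Fin n) (Fin n) ℝ)) v v := by
    intro v
    rw [qf_matrix_add, qf_matrix_add, qf_matrix_sub, qf_smul_one]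
    have h1 := hA v
    have h2 := keyB (HF xplus - HF x) v
    have h3 : ‖Matrix.toEuclideanCLM (𝕜 := ℝ) (HF xplus - HF x)‖ * ‖v‖^2
        ≤ L₂ * ‖s‖ * ‖v‖^2 :=
      mul_le_mul_of_nonneg_right hBop (sq_nonneg _)
    have h4 := (abs_le.mp (le_trans h2 h3)).1
    rw [qf_matrix_sub] at h4
    nlinarith [h1, h4, sq_nonneg ‖v‖, mul_nonneg hL₂ (mul_nonneg (norm_nonneg s) (sq_nonneg ‖v‖))]
  constructor
  · -- positive semidefiniteness
    refine Matrix.PosSemidef.of_dotProduct_mulVec_nonneg ?_ ?_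
    · -- hermitian
      have h1 : (HF xplus - HF x + Hhat).IsHermitian :=
        ((hHFherm xplus).sub (hHFherm x)).add
          (by rw [Matrix.IsHermitian]; ext i j
              rw [Matrix.conjTranspose_apply, star_trivial, hHhat.apply])
      have h2 : ((((α + 2 * L₂) / 2) * ‖s‖) • (1 : Matrix (Fin n) (Fin n) ℝ)).IsHermitian := by
        rw [Matrix.IsHermitian]
        ext i j
        rw [Matrix.conjTranspose_apply, star_trivial, Matrix.smul_apply, Matrix.smul_apply,
          Matrix.one_apply, Matrix.one_apply]
        simp [eq_comm]
      exact h1.add h2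
    · intro v0
      set v : EuclideanSpace ℝ (Fin n) := (WithLp.equiv 2 (Fin n → ℝ)).symm v0 with hv_def
      have hsv : star v0 = v0 := by funext i; simp
      have hdot : dotProduct (star v0) (Matrix.mulVec (HF xplus - HF x + Hhat +
          (((α + 2 * L₂) / 2) * ‖s‖) • (1 : Matrix (Fin n) (Fin n) ℝ)) v0)
          = qf (HF xplus - HF x + Hhat +
          (((α + 2 * L₂) / 2) * ‖s‖) • (1 : Matrix (Fin n) (Fin n) ℝ)) v v := by
        rw [hsv]
        have hvi : ∀ k, v k = v0 k := fun k => rfl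
        simp only [dotProduct, Matrix.mulVec, qf, Finset.mul_sum, hvi]
        exact Finset.sum_congr rfl fun i _ => Finset.sum_congr rfl fun j _ => by ring
      rw [hdot]
      exact hquad v
  · -- eigenvalue bound
    by_cases hn : n = 0
    · subst hn
      have hempty : ∀ A : Matrix (Fin 0) (Fin 0) ℝ, lambdaMin A = 0 := by
        intro A
        unfold lambdaMin
        have hset : {c : ℝ | ∃ w : EuclideanSpace ℝ (Fin 0),
            ‖w‖ = 1 ∧ c = ∑ i, ∑ j, w i * A i j * w j} = ∅ := by
          ext c
          simp only [Set.mem_setOf_eq, Set.mem_empty_iff_false, iff_false, not_exists]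
          rintro w ⟨hw, -⟩
          have hw0 : w = 0 := by
            ext i; exact i.elim0
          rw [hw0, norm_zero] at hw
          norm_num at hw
        rw [hset, Real.sInf_empty]
      rw [hempty, hempty]
      have hs0 : ‖s‖ = 0 := by
        have : s = 0 := by ext i; exact i.elim0
        rw [this, norm_zero]
      rw [hs0]
      norm_num
    · have hn' : 0 < n := Nat.pos_of_ne_zero hn
      set i0 : Fin n := ⟨0, hn'⟩ with hi0
      have hunit : ‖(EuclideanSpace.single i0 (1:ℝ))‖ = 1 := by
        rw [EuclideanSpace.norm_single]; norm_num
      set A : Matrix (Fin n) (Fin n) ℝ := HF x - Hhat with hA_def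
      have hbddA : BddBelow {c : ℝ | ∃ w : EuclideanSpace ℝ (Fin n),
          ‖w‖ = 1 ∧ c = ∑ i, ∑ j, w i * A i j * w j} := by
        refine ⟨-(∑ i, ∑ j, |A i j|), ?_⟩
        rintro c ⟨w, hw, rfl⟩
        have h1 := qf_abs_le_of_unit A w hw
        have h2 := neg_abs_le (qf A w w)
        have : -(∑ i, ∑ j, |A i j|) ≤ qf A w w := by linarith
        exact this
      have hle : ∀ w : EuclideanSpace ℝ (Fin n), ‖w‖ = 1 →
          lambdaMin A - ((α + 2 * L₂) / 2) * ‖s‖ ≤ qf (HF xplus) w w := by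
        intro w hw
        have hq := hquad w
        rw [qf_matrix_add, qf_matrix_add, qf_matrix_sub, qf_smul_one, hw] at hq
        have hmem : qf A w w ∈ {c : ℝ | ∃ w : EuclideanSpace ℝ (Fin n),
            ‖w‖ = 1 ∧ c = ∑ i, ∑ j, w i * A i j * w j} := ⟨w, hw, rfl⟩
        have h1 : lambdaMin A ≤ qf A w w := csInf_le hbddA hmem
        have h2 : qf A w w = qf (HF x) w w - qf Hhat w w := qf_matrix_sub _ _ _ _
        nlinarith [hq, h1, h2]
      show lambdaMin A - ((α + 2 * L₂) / 2) * ‖s‖ ≤ lambdaMin (HF xplus)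
      unfold lambdaMin
      apply le_csInf
      · exact ⟨qf (HF xplus) (EuclideanSpace.single i0 (1:ℝ)) (EuclideanSpace.single i0 (1:ℝ)),
          EuclideanSpace.single i0 (1:ℝ), hunit, rfl⟩
      · rintro c ⟨w, hw, rfl⟩
        exact hle w hw
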